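/- For m ≥ 2 and d ≥ 1, the quantity (1/d^2) · ∑_{e | d} μ(d/e) · (-1)^{(m-1)(d-e)} · C(me-1, e-1) is a non-negative integer, where μ is the Möbius function and C denotes the binomial coefficient. -/

import Mathlib

open Finset

lemma prod_Ico_sub (N K : ℕ) :
    ∏ j ∈ Finset.Ico 1 K, (N - j) = (N-1).descFactorial (K-1) := by
  rw [Nat.descFactorial_eq_prod_range, Finset.prod_Ico_eq_prod_range]
  exact Finset.prod_congr rfl (fun i _ => by omega)

lemma prod_Ico_id (K : ℕ) (hK : 1 ≤ K) :
    ∏ j ∈ Finset.Ico 1 K, j = (K-1).factorial := by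
  have h : K = (K-1)+1 := by omega
  rw [h, Finset.prod_Ico_id_eq_factorial]
  simp

lemma filter_dvd_prod (p n : ℕ) (hp : 2 ≤ p) (f : ℕ → ℕ) :
    ∏ j ∈ (Finset.Ico 1 (n*p)).filter (p ∣ ·), f j = ∏ i ∈ Finset.Ico 1 n, f (p*i) := by
  apply Finset.prod_nbij' (fun j => j / p) (fun i => p * i)
  · intro a ha
    simp only [mem_filter, mem_Ico] at ha
    obtain ⟨⟨h1, h2⟩, c, hc⟩ := ha
    simp only [mem_Ico]
    subst hc
    rw [Nat.mul_div_cancel_left _ (by omega : 0 < p)]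
    constructor
    · rcases Nat.eq_zero_or_pos c with h | h
      · subst h; simp at h1
      · exact h
    · by_contra h
      push_neg at h
      have : n * p ≤ p * c := by calc n * p = p * n := by ring
                                      _ ≤ p * c := Nat.mul_le_mul_left p h
      omega
  · intro i hi
    simp only [mem_Ico] at hi
    simp only [mem_filter, mem_Ico]
    refine ⟨⟨by nlinarith, ?_⟩, ⟨i, rfl⟩⟩
    have := hi.1; have := hi.2; nlinarith
  · intro a ha
    simp only [mem_filter] at ha
    obtain ⟨-, c, hc⟩ := ha
    subst hc
    rw [Nat.mul_div_cancel_left _ (by omega : 0 < p)]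
  · intro i _
    rw [Nat.mul_div_cancel_left _ (by omega : 0 < p)]
  · intro a ha
    simp only [mem_filter] at ha
    obtain ⟨-, c, hc⟩ := ha
    subst hc
    rw [Nat.mul_div_cancel_left _ (by omega : 0 < p)]

lemma keyIdentity (p m n : ℕ) (hp : 2 ≤ p) (hm : 1 ≤ m) (hn : 1 ≤ n) :
    Nat.choose (m*n*p - 1) (n*p - 1) * ∏ j ∈ (Finset.Ico 1 (n*p)).filter (fun j => ¬ p ∣ j), j
    = Nat.choose (m*n - 1) (n - 1) *
        ∏ j ∈ (Finset.Ico 1 (n*p)).filter (fun j => ¬ p ∣ j), (m*n*p - j) := by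
  set S := Finset.Ico 1 (n*p) with hS
  set J := S.filter (fun j => ¬ p ∣ j) with hJ
  have hK : 1 ≤ n * p := by nlinarith
  have hdvd_id : ∏ j ∈ S.filter (fun j => p ∣ j), j = p^(n-1) * (n-1).factorial := by
    rw [hS, filter_dvd_prod p n hp (fun j => j), Finset.prod_mul_distrib, Finset.prod_const,
      Nat.card_Ico, prod_Ico_id n hn]
  have hdvd_sub : ∏ j ∈ S.filter (fun j => p ∣ j), (m*n*p - j)
      = p^(n-1) * ((m*n-1).descFactorial (n-1)) := by
    rw [hS, filter_dvd_prod p n hp (fun j => m*n*p - j)]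
    have hcg : ∀ i ∈ Finset.Ico 1 n, m*n*p - p*i = p * (m*n - i) := by
      intro i hi
      rw [Nat.mul_sub]
      ring_nf
    rw [Finset.prod_congr rfl hcg, Finset.prod_mul_distrib, Finset.prod_const,
      Nat.card_Ico, prod_Ico_sub]
  have e1 : Nat.choose (m*n*p-1) (n*p-1) * (n*p-1).factorial
      = (m*n*p-1).descFactorial (n*p-1) := by
    rw [Nat.descFactorial_eq_factorial_mul_choose]; ring
  have e4 : (n*p-1).factorial = (p^(n-1)*(n-1).factorial) * ∏ j ∈ J, j := by
    rw [← prod_Ico_id (n*p) hK, ← Finset.prod_filter_mul_prod_filter_not S (fun j => p ∣ j),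
      hdvd_id]
  have e3 : (m*n*p-1).descFactorial (n*p-1)
      = (p^(n-1) * (m*n-1).descFactorial (n-1)) * ∏ j ∈ J, (m*n*p - j) := by
    rw [← prod_Ico_sub (m*n*p) (n*p), ← Finset.prod_filter_mul_prod_filter_not S
      (fun j => p ∣ j), hdvd_sub]
  have e5 : (m*n-1).descFactorial (n-1) = (n-1).factorial * Nat.choose (m*n-1) (n-1) :=
    Nat.descFactorial_eq_factorial_mul_choose _ _
  have hpos : 0 < p^(n-1) * (n-1).factorial :=
    Nat.mul_pos (Nat.pow_pos (by omega)) (Nat.factorial_pos _)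
  apply Nat.eq_of_mul_eq_mul_left hpos
  calc p^(n-1) * (n-1).factorial * (Nat.choose (m*n*p - 1) (n*p - 1) * ∏ j ∈ J, j)
      = Nat.choose (m*n*p-1) (n*p-1) * ((p^(n-1)*(n-1).factorial) * ∏ j ∈ J, j) := by ring
    _ = Nat.choose (m*n*p-1) (n*p-1) * (n*p-1).factorial := by rw [← e4]
    _ = (m*n*p-1).descFactorial (n*p-1) := e1
    _ = (p^(n-1) * ((n-1).factorial * Nat.choose (m*n-1) (n-1))) * ∏ j ∈ J, (m*n*p - j) := by
        rw [e3, e5]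
    _ = p^(n-1) * (n-1).factorial * (Nat.choose (m*n-1) (n-1) * ∏ j ∈ J, (m*n*p - j)) := by
        ring

lemma prod_sub_sq_zero {R : Type*} [CommRing R] {ι : Type*} [DecidableEq ι]
    (s : Finset ι) (f : ι → R) (c : R) (hc : c^2 = 0) :
    ∏ i ∈ s, (f i - c) = ∏ i ∈ s, f i - c * ∑ i ∈ s, ∏ j ∈ s.erase i, f j := by
  induction s using Finset.induction_on with
  | empty => simp
  | insert a t ha ih =>
    rw [Finset.prod_insert ha, Finset.prod_insert ha, ih, Finset.sum_insert ha,
      Finset.erase_insert ha]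
    have h2 : ∀ i ∈ t, ∏ j ∈ (insert a t).erase i, f j = f a * ∏ j ∈ t.erase i, f j := by
      intro i hi
      have hne : i ≠ a := by rintro rfl; exact ha hi
      rw [Finset.erase_insert_of_ne hne.symm, Finset.prod_insert (by
        simp only [Finset.mem_erase]; tauto)]
    rw [Finset.sum_congr rfl h2, ← Finset.mul_sum]
    linear_combination (∑ i ∈ t, ∏ j ∈ t.erase i, f j) * hc

lemma card_J (p n : ℕ) (hp : 2 ≤ p) (hn : 1 ≤ n) :
    ((Finset.Ico 1 (n*p)).filter (fun j => ¬ p ∣ j)).card = n*p - n := by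
  have hIco : Finset.Ico 1 (n*p) = Finset.Ioc 0 (n*p - 1) := by
    ext j
    simp only [mem_Ico, mem_Ioc]
    have : 1 ≤ n*p := by nlinarith
    omega
  have hdvd : ((Finset.Ico 1 (n*p)).filter (fun j => p ∣ j)).card = n - 1 := by
    rw [hIco, Nat.Ioc_filter_dvd_card_eq_div]
    apply Nat.div_eq_of_lt_le
    · have hlt : (n-1)*p < n*p := (Nat.mul_lt_mul_right (by omega)).mpr (by omega)
      omega
    · have : (n - 1 + 1) * p = n * p := by
        congr 1
        omega
      rw [this]
      have h1 : 1 ≤ n * p := by nlinarith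
      omega
  have htot := Finset.card_filter_add_card_filter_not (s := Finset.Ico 1 (n*p))
    (fun j => p ∣ j)
  rw [Nat.card_Ico, hdvd] at htot
  have h1 : 1 ≤ n * p := by nlinarith
  have h2 : n ≤ n * p := by nlinarith
  omega

lemma E_dvd (p n : ℕ) (hp : p.Prime) (hn : 1 ≤ n) (hcase : p ≠ 2 ∨ 2 ∣ n) :
    (p:ℤ)^((n*p).factorization p) ∣
      ∑ j ∈ (Finset.Ico 1 (n*p)).filter (fun j => ¬ p ∣ j),
        ∏ i ∈ ((Finset.Ico 1 (n*p)).filter (fun j => ¬ p ∣ j)).erase j, (i:ℤ) := by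
  set J := (Finset.Ico 1 (n*p)).filter (fun j => ¬ p ∣ j) with hJdef
  set k := (n*p).factorization p with hk
  have hcast : ((p:ℤ))^k = ((p^k : ℕ) : ℤ) := by push_cast; ring
  rw [hcast, ← ZMod.intCast_zmod_eq_zero_iff_dvd]
  push_cast
  have hnp0 : ((n*p : ℕ) : ZMod (p^k)) = 0 := by
    rw [ZMod.natCast_eq_zero_iff]
    exact Nat.ordProj_dvd _ _
  have hmemJ : ∀ a, a ∈ J ↔ (1 ≤ a ∧ a < n*p ∧ ¬ p ∣ a) := by
    intro a; rw [hJdef]; simp only [mem_filter, mem_Ico]; tauto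
  have hgJ : ∀ a ∈ J, n*p - a ∈ J := by
    intro a ha
    rw [hmemJ] at ha ⊢
    obtain ⟨h1, h2, h3⟩ := ha
    refine ⟨?_, by omega, ?_⟩
    · omega
    · intro hdvd
      have : p ∣ n*p - (n*p - a) := (Nat.dvd_sub (dvd_mul_left p n) hdvd)
      rw [Nat.sub_sub_self (by omega)] at this
      exact h3 this
  have hgne : ∀ a ∈ J, n*p - a ≠ a := by
    intro a ha hEq
    rw [hmemJ] at ha
    obtain ⟨h1, h2, h3⟩ := ha
    have h2a : n*p = 2*a := by omega
    rcases eq_or_ne p 2 with hp2 | hp2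
    · rcases hcase with hc | hc
      · exact hc hp2
      · subst hp2
        have : a = n := by omega
        subst this
        exact h3 (by omega)
    · have : p ∣ 2*a := h2a ▸ dvd_mul_left p n
      rcases (Nat.Prime.dvd_mul hp).mp this with h | h
      · exact hp2 ((Nat.prime_dvd_prime_iff_eq hp Nat.prime_two).mp h)
      · exact h3 h
  apply Finset.sum_involution (fun a _ => n*p - a)
  · intro a ha
    have hg : n*p - a ∈ J := hgJ a ha
    have hne : n*p - a ≠ a := hgne a ha
    have h1 : n*p - a ∈ J.erase a := Finset.mem_erase.mpr ⟨hne, hg⟩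
    have h2 : a ∈ (J.erase (n*p - a)) := Finset.mem_erase.mpr ⟨hne ∘ Eq.symm, ha⟩
    rw [← Finset.mul_prod_erase _ _ h1, ← Finset.mul_prod_erase _ _ h2,
      Finset.erase_right_comm (a := a) (b := n*p - a)]
    have hale : a ≤ n*p := by rw [hmemJ] at ha; omega
    have : ((n*p - a : ℕ) : ZMod (p^k)) + ((a : ℕ) : ZMod (p^k)) = 0 := by
      rw [← Nat.cast_add, Nat.sub_add_cancel hale, hnp0]
    linear_combination (∏ x ∈ (J.erase (n*p - a)).erase a, (x : ZMod (p^k))) * this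
  · intro a ha _
    exact hgne a ha
  · exact hgJ
  · intro a ha
    rw [hmemJ] at ha
    omega

section
variable (p m n : ℕ)

lemma prodCongr (hp : p.Prime) (hm : 1 ≤ m) (hn : 1 ≤ n) :
    ((p:ℤ))^(2 * (n*p).factorization p) ∣
      (∏ j ∈ (Finset.Ico 1 (n*p)).filter (fun j => ¬ p ∣ j), ((m*n*p - j : ℕ) : ℤ))
      - (-1)^((m-1)*(n*p - n)) *
          ∏ j ∈ (Finset.Ico 1 (n*p)).filter (fun j => ¬ p ∣ j), (j : ℤ) := by
  have hp2 := hp.two_le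
  set J := (Finset.Ico 1 (n*p)).filter (fun j => ¬ p ∣ j) with hJdef
  set k := (n*p).factorization p with hk
  have hnpmnp : n*p ≤ m*n*p := by
    calc n*p = 1*(n*p) := by ring
      _ ≤ m*(n*p) := Nat.mul_le_mul_right _ hm
      _ = m*n*p := by ring
  have hJle : ∀ j ∈ J, j ≤ m*n*p := by
    intro j hj
    simp only [hJdef, mem_filter, mem_Ico] at hj
    omega
  have hcardJ : J.card = n*p - n := card_J p n hp2 hn
  have hpk_np : p^k ∣ n*p := Nat.ordProj_dvd _ _
  have hpk_mnp : p^k ∣ m*n*p := hpk_np.trans ⟨m, by ring⟩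
  have hcast : ((p:ℤ))^(2*k) = ((p^(2*k) : ℕ) : ℤ) := by push_cast; ring
  rw [hcast, ← ZMod.intCast_zmod_eq_zero_iff_dvd]
  push_cast
  by_cases hcase : p ≠ 2 ∨ 2 ∣ n
  · -- Case A
    have hevenJ : Even (n*p - n) := by
      have hmulsub : n*p - n = n*(p-1) := by
        rw [Nat.mul_sub]; ring_nf
      rw [hmulsub, Nat.even_mul]
      rcases hcase with h | h
      · right
        have hodd : Odd p := hp.odd_of_ne_two h
        rw [Nat.even_sub (by omega)]
        simp [Nat.odd_iff.mp hodd, Nat.even_iff, Nat.odd_iff]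
      · left; exact (even_iff_two_dvd).mpr h
    have hsign : ((-1 : ZMod (p^(2*k)))^((m-1)*(n*p - n))) = 1 :=
      Even.neg_one_pow (hevenJ.mul_left _)
    have hsign2 : ((-1 : ZMod (p^(2*k)))^(J.card)) = 1 := by
      rw [hcardJ]; exact Even.neg_one_pow hevenJ
    set M : ZMod (p^(2*k)) := ((m*n*p : ℕ) : ZMod (p^(2*k))) with hM
    have hMsq : M^2 = 0 := by
      rw [hM, ← Nat.cast_pow, ZMod.natCast_eq_zero_iff]
      calc p^(2*k) = (p^k)^2 := by ring
        _ ∣ (m*n*p)^2 := pow_dvd_pow_of_dvd hpk_mnp 2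
    have hterm : ∀ j ∈ J, ((m*n*p - j : ℕ) : ZMod (p^(2*k)))
        = ((j : ZMod (p^(2*k))) - M) * (-1) := by
      intro j hj
      rw [Nat.cast_sub (hJle j hj), hM]; ring
    rw [Finset.prod_congr rfl hterm, Finset.prod_mul_distrib, Finset.prod_const,
      prod_sub_sq_zero J _ M hMsq, hsign, hsign2]
    have hME : M * ((∑ j ∈ J, ∏ i ∈ J.erase j, (i : ZMod (p^(2*k))))) = 0 := by
      have hE := E_dvd p n hp hn hcase
      have : ((p : ℤ))^(2*k) ∣ (m*n*p : ℤ) * ∑ j ∈ J, ∏ i ∈ J.erase j, (i:ℤ) := by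
        have h1 : ((p:ℤ))^k ∣ (m*n*p : ℤ) := by exact_mod_cast Int.natCast_dvd_natCast.mpr hpk_mnp
        calc ((p:ℤ))^(2*k) = (p:ℤ)^k * (p:ℤ)^k := by ring
          _ ∣ (m*n*p : ℤ) * ∑ j ∈ J, ∏ i ∈ J.erase j, (i:ℤ) := mul_dvd_mul h1 hE
      have h0 : (((m*n*p : ℤ) * ∑ j ∈ J, ∏ i ∈ J.erase j, (i:ℤ) : ℤ) : ZMod (p^(2*k))) = 0 := by
        rw [ZMod.intCast_zmod_eq_zero_iff_dvd]
        exact_mod_cast this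
      push_cast at h0
      have hM' : M = (m : ZMod (p^(2*k))) * n * p := by rw [hM]; push_cast; ring
      rw [hM']
      exact h0
    rw [hME]
    ring
  · -- Case B : p = 2, n odd
    push_neg at hcase
    obtain ⟨hp2', hnodd⟩ := hcase
    subst hp2'
    have hk1 : k = 1 := by
      rw [hk, Nat.factorization_mul (by omega) (by omega)]
      simp only [Finsupp.coe_add, Pi.add_apply]
      rw [Nat.factorization_eq_zero_of_not_dvd hnodd, Nat.Prime.factorization_self Nat.prime_two]
    rw [hk1]
    have hcard : J.card = n := by rw [hcardJ]; omega
    rcases Nat.even_or_odd m with hme | hmo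
    · -- m even
      have hM0 : ((m*n*2 : ℕ) : ZMod (2^(2*1))) = 0 := by
        rw [ZMod.natCast_eq_zero_iff]
        obtain ⟨m', rfl⟩ := hme
        ring_nf
        exact ⟨m'*n, by ring⟩
      have hterm : ∀ j ∈ J, ((m*n*2 - j : ℕ) : ZMod (2^(2*1)))
          = (j : ZMod (2^(2*1))) * (-1) := by
        intro j hj
        rw [Nat.cast_sub (hJle j hj), hM0]; ring
      rw [Finset.prod_congr rfl hterm, Finset.prod_mul_distrib, Finset.prod_const, hcard]
      have h1 : ((-1 : ZMod (2^(2*1)))^n) = -1 := Odd.neg_one_pow (Nat.odd_iff.mpr (by omega))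
      have h2 : ((-1 : ZMod (2^(2*1)))^((m-1)*(n*2-n))) = -1 := by
        apply Odd.neg_one_pow
        have hsub : n*2 - n = n := by omega
        rw [hsub]
        obtain ⟨m', rfl⟩ := hme
        refine Nat.odd_mul.mpr ⟨Nat.odd_iff.mpr (by omega), Nat.odd_iff.mpr (by omega)⟩
      rw [h1, h2]
      ring
    · -- m odd
      have hterm : ∀ j ∈ J, ((m*n*2 - j : ℕ) : ZMod (2^(2*1))) = (j : ZMod (2^(2*1))) := by
        intro j hj
        have hjodd : ¬ 2 ∣ j := by
          simp only [hJdef, mem_filter] at hj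
          exact hj.2
        have hdvd : (4:ℤ) ∣ ((m*n*2 - j : ℕ) : ℤ) - (j : ℤ) := by
          rw [Nat.cast_sub (hJle j hj)]
          push_cast
          have hmn : Odd (m*n) := Nat.odd_mul.mpr ⟨hmo, Nat.odd_iff.mpr (by omega)⟩
          obtain ⟨a, ha⟩ := hmn
          obtain ⟨b, hb⟩ : ∃ b, j = 2*b+1 := ⟨j/2, by omega⟩
          refine ⟨(a:ℤ) - (b:ℤ), ?_⟩
          have ha' : ((m:ℤ))*(n:ℤ) = 2*(a:ℤ)+1 := by exact_mod_cast congrArg (Nat.cast (R := ℤ)) ha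
          rw [hb]
          push_cast
          linarith
        have := (ZMod.intCast_zmod_eq_zero_iff_dvd (((m*n*2 - j : ℕ) : ℤ) - (j : ℤ)) 4).mpr hdvd
        push_cast at this
        have h4 : (2:ℕ)^(2*1) = 4 := by norm_num
        rw [h4]
        linear_combination this
      rw [Finset.prod_congr rfl hterm]
      have hsign : ((-1 : ZMod (2^(2*1)))^((m-1)*(n*2 - n))) = 1 := by
        apply Even.neg_one_pow
        apply Even.mul_right
        rcases hmo with ⟨m', rfl⟩
        exact ⟨m', by omega⟩
      rw [hsign]
      ring

end

lemma keyCongr (p m n : ℕ) (hp : p.Prime) (hm : 1 ≤ m) (hn : 1 ≤ n) :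
    ((p:ℤ))^(2 * (n*p).factorization p) ∣
      (Nat.choose (m*n*p - 1) (n*p - 1) : ℤ)
        - (-1)^((m-1)*(n*p - n)) * (Nat.choose (m*n - 1) (n - 1) : ℤ) := by
  have hp2 := hp.two_le
  set J := (Finset.Ico 1 (n*p)).filter (fun j => ¬ p ∣ j) with hJdef
  set k := (n*p).factorization p with hk
  set A : ℤ := ∏ j ∈ J, (j : ℤ) with hA
  set B : ℤ := ∏ j ∈ J, ((m*n*p - j : ℕ) : ℤ) with hB
  set σ : ℤ := (-1)^((m-1)*(n*p - n)) with hσ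
  have hid : (Nat.choose (m*n*p - 1) (n*p - 1) : ℤ) * A = (Nat.choose (m*n - 1) (n - 1) : ℤ) * B := by
    have h := congrArg (Nat.cast (R := ℤ)) (keyIdentity p m n hp2 hm hn)
    push_cast at h
    rw [hA, hB]
    exact h
  have hcongr : ((p:ℤ))^(2*k) ∣ B - σ * A := prodCongr p m n hp hm hn
  have hdvd : ((p:ℤ))^(2*k) ∣
      ((Nat.choose (m*n*p - 1) (n*p - 1) : ℤ) - σ * (Nat.choose (m*n - 1) (n - 1) : ℤ)) * A := by
    have : ((Nat.choose (m*n*p - 1) (n*p - 1) : ℤ) - σ * (Nat.choose (m*n - 1) (n - 1) : ℤ)) * A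
        = (Nat.choose (m*n - 1) (n - 1) : ℤ) * (B - σ * A) := by
      rw [sub_mul, hid]; ring
    rw [this]
    exact Dvd.dvd.mul_left hcongr _
  have hcop : IsCoprime ((p:ℤ)^(2*k)) A := by
    have hnat : Nat.Coprime (p^(2*k)) (∏ j ∈ J, j) := by
      apply Nat.Coprime.pow_left
      apply Nat.Coprime.prod_right
      intro i hi
      simp only [hJdef, Finset.mem_filter] at hi
      exact (Nat.Prime.coprime_iff_not_dvd hp).mpr hi.2
    have := Nat.isCoprime_iff_coprime.mpr hnat
    have hAeq : A = ((∏ j ∈ J, j : ℕ) : ℤ) := by rw [hA]; push_cast; ring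
    have hpow : ((p:ℤ))^(2*k) = ((p^(2*k) : ℕ) : ℤ) := by push_cast; ring
    rw [hAeq, hpow]
    exact this
  exact hcop.dvd_of_dvd_mul_right hdvd
lemma gdiff (p m d e : ℕ) (hp : p.Prime) (hm : 1 ≤ m) (he : 1 ≤ e) (hpe : p ∣ e) (hed : e ≤ d) :
    ((p:ℤ))^(2 * e.factorization p) ∣
      ((-1)^((m-1)*(d - e)) * (Nat.choose (m*e - 1) (e - 1) : ℤ)
        - (-1)^((m-1)*(d - e/p)) * (Nat.choose (m*(e/p) - 1) (e/p - 1) : ℤ)) := by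
  set n := e / p with hn
  have hnp : n * p = e := Nat.div_mul_cancel hpe
  have hp2 := hp.two_le
  have hn1 : 1 ≤ n := by
    rcases Nat.eq_zero_or_pos n with h | h
    · rw [h] at hnp; omega
    · exact h
  have hne : n ≤ e := by rw [← hnp]; nlinarith
  have hKey := keyCongr p m n hp hm hn1
  rw [show m*n*p = m*e by rw [← hnp]; ring, hnp] at hKey
  obtain ⟨c, hc⟩ := hKey
  set u : ℤ := (-1)^((m-1)*(d-e)) with hu
  set v : ℤ := (-1)^((m-1)*(e - n)) with hv
  set w : ℤ := (-1)^((m-1)*(d - n)) with hw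
  have huv : u * v = w := by
    rw [hu, hv, hw, ← pow_add, ← Nat.mul_add, Nat.sub_add_sub_cancel hed hne]
  exact ⟨u * c, by linear_combination u * hc + (Nat.choose (m*n - 1) (n-1) : ℤ) * huv⟩

lemma moebius_pair (m d p : ℕ) (hm : 2 ≤ m) (hd : 1 ≤ d) (hp : p.Prime) (hpd : p ∣ d) :
    ((p:ℤ))^(2 * d.factorization p) ∣
      ∑ e ∈ d.divisors, (ArithmeticFunction.moebius (d / e) : ℤ) * (-1)^((m-1)*(d - e))
        * (Nat.choose (m*e - 1) (e - 1) : ℤ) := by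
  have hp2 := hp.two_le
  set g : ℕ → ℤ := fun e => (-1)^((m-1)*(d - e)) * (Nat.choose (m*e - 1) (e - 1) : ℤ) with hg
  set F : ℕ → ℤ := fun e => (ArithmeticFunction.moebius (d / e) : ℤ) * g e with hF
  have hFeq : ∀ e, (ArithmeticFunction.moebius (d / e) : ℤ) * (-1)^((m-1)*(d - e))
      * (Nat.choose (m*e - 1) (e - 1) : ℤ) = F e := by
    intro e; rw [hF, hg]; ring
  rw [Finset.sum_congr rfl (fun e _ => hFeq e)]
  have hmem : ∀ e, e ∈ d.divisors ↔ (e ∣ d ∧ 1 ≤ e ∧ e ≤ d) := by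
    intro e
    rw [Nat.mem_divisors]
    constructor
    · rintro ⟨h1, h2⟩
      exact ⟨h1, Nat.pos_of_dvd_of_pos h1 (by omega), Nat.le_of_dvd (by omega) h1⟩
    · rintro ⟨h1, -, -⟩
      exact ⟨h1, by omega⟩
  -- key divisor facts for e ∈ D₀
  have hD0 : ∀ e, e ∣ d → ¬ p ∣ d/e → (p ∣ e ∧ e.factorization p = d.factorization p
      ∧ e/p ∣ d ∧ d/(e/p) = p * (d/e) ∧ (e/p)*p = e) := by
    intro e hed hnd
    obtain ⟨t, ht⟩ := hed
    have he1 : 1 ≤ e := Nat.pos_of_dvd_of_pos ⟨t, ht⟩ (by omega)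
    have ht' : d / e = t := by rw [ht, Nat.mul_div_cancel_left _ (by omega)]
    rw [ht'] at hnd
    have hpe : p ∣ e := by
      rcases (Nat.Prime.dvd_mul hp).mp (ht ▸ hpd) with h | h
      · exact h
      · exact absurd h hnd
    obtain ⟨s, hs⟩ := hpe
    have hs1 : 1 ≤ s := by
      rcases Nat.eq_zero_or_pos s with h | h
      · subst h; rw [Nat.mul_zero] at hs; omega
      · exact h
    refine ⟨⟨s, hs⟩, ?_, ?_, ?_, ?_⟩
    · have ht0 : t ≠ 0 := by
        rintro rfl
        rw [Nat.mul_zero] at ht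
        omega
      rw [ht, Nat.factorization_mul (by omega) ht0, Finsupp.add_apply,
        Nat.factorization_eq_zero_of_not_dvd hnd]
      simp
    · have : e/p = s := by rw [hs, Nat.mul_div_cancel_left _ (by omega)]
      rw [this]
      exact ⟨p*t, by rw [ht, hs]; ring⟩
    · have h1 : e/p = s := by rw [hs, Nat.mul_div_cancel_left _ (by omega)]
      calc d/(e/p) = (e*t)/s := by rw [h1, ht]
        _ = (s*(p*t))/s := by congr 1; rw [hs]; ring
        _ = p*t := Nat.mul_div_cancel_left _ (by omega)
        _ = p*(d/e) := by rw [ht']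
    · rw [hs, Nat.mul_div_cancel_left _ (by omega)]; ring
  set D0 := d.divisors.filter (fun e => ¬ p ∣ d/e) with hD0def
  set D1 := d.divisors.filter (fun e => p ∣ d/e ∧ ¬ (p*p) ∣ d/e) with hD1def
  have hsplit : ∑ e ∈ d.divisors, F e
      = ∑ e ∈ d.divisors.filter (fun e => p ∣ d/e), F e + ∑ e ∈ D0, F e :=
    (Finset.sum_filter_add_sum_filter_not _ _ _).symm
  have hstep2 : ∑ e ∈ d.divisors.filter (fun e => p ∣ d/e), F e = ∑ e ∈ D1, F e := by
    symm
    apply Finset.sum_subset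
    · intro e he
      rw [hD1def, Finset.mem_filter] at he
      rw [Finset.mem_filter]
      exact ⟨he.1, he.2.1⟩
    · intro e he hne
      rw [Finset.mem_filter] at he
      rw [hD1def, Finset.mem_filter] at hne
      have hpp : p*p ∣ d/e := by tauto
      have hnsq : ¬ Squarefree (d/e) := by
        intro hsq
        exact hp.one_lt.ne' (Nat.isUnit_iff.mp (hsq p hpp))
      simp only [hF]
      rw [ArithmeticFunction.moebius_eq_zero_of_not_squarefree hnsq]
      simp
  have hstep3 : ∑ e ∈ D1, F e = ∑ e ∈ D0, F (e/p) := by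
    apply Finset.sum_nbij' (fun e => e * p) (fun e => e / p)
    · -- maps D1 → D0
      intro e he
      rw [hD1def, Finset.mem_filter, hmem] at he
      obtain ⟨⟨hed, he1, hel⟩, hpde, hnp2⟩ := he
      obtain ⟨s, hs⟩ := hpde
      obtain ⟨t, ht⟩ := hed
      rw [hD0def, Finset.mem_filter, hmem]
      have hdee : d / e = p * s := hs
      have htpe : t = p * s := by
        rw [ht, Nat.mul_div_cancel_left _ (by omega)] at hs
        exact hs
      have hepd : e * p ∣ d := ⟨s, by rw [ht, htpe]; ring⟩
      have hdep : d / (e*p) = s := by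
        rw [ht, htpe]
        rw [show e * (p*s) = (e*p)*s by ring, Nat.mul_div_cancel_left _ (Nat.mul_pos (by omega) (by omega : 0 < p))]
      refine ⟨⟨hepd, Nat.mul_pos (by omega) (by omega : 0 < p), Nat.le_of_dvd (by omega) hepd⟩, ?_⟩
      rw [hdep]
      intro hps
      exact hnp2 (hs ▸ Nat.mul_dvd_mul_left p hps)
    · -- maps D0 → D1
      intro e he
      rw [hD0def, Finset.mem_filter, hmem] at he
      obtain ⟨⟨hed, he1, hel⟩, hnd⟩ := he
      obtain ⟨hpe, hfact, hepd, hdep, hepe⟩ := hD0 e hed hnd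
      rw [hD1def, Finset.mem_filter, hmem, hdep]
      have hep1 : 1 ≤ e/p := by
        rcases Nat.eq_zero_or_pos (e/p) with h | h
        · rw [h] at hepe; omega
        · exact h
      refine ⟨⟨hepd, hep1, Nat.le_of_dvd (by omega) hepd⟩, ⟨d/e, rfl⟩, ?_⟩
      intro hpp
      exact hnd ((Nat.mul_dvd_mul_iff_left (by omega : 0 < p)).mp hpp)
    · intro e he
      rw [Nat.mul_div_cancel _ (by omega)]
    · intro e he
      rw [hD0def, Finset.mem_filter, hmem] at he
      obtain ⟨⟨hed, he1, hel⟩, hnd⟩ := he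
      exact (hD0 e hed hnd).2.2.2.2
    · intro e he
      rw [Nat.mul_div_cancel _ (by omega)]
  rw [hsplit, hstep2, hstep3, ← Finset.sum_add_distrib]
  apply Finset.dvd_sum
  intro e he
  rw [hD0def, Finset.mem_filter, hmem] at he
  obtain ⟨⟨hed, he1, hel⟩, hnd⟩ := he
  obtain ⟨hpe, hfact, hepd, hdep, hepe⟩ := hD0 e hed hnd
  have hmu : (ArithmeticFunction.moebius (d / (e/p)) : ℤ)
      = - (ArithmeticFunction.moebius (d / e) : ℤ) := by
    rw [hdep, ArithmeticFunction.IsMultiplicative.map_mul_of_coprime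
      ArithmeticFunction.isMultiplicative_moebius (hp.coprime_iff_not_dvd.mpr hnd),
      ArithmeticFunction.moebius_apply_prime hp]
    ring
  have hsum : F (e/p) + F e = (ArithmeticFunction.moebius (d / e) : ℤ) * (g e - g (e/p)) := by
    simp only [hF]
    rw [hmu]
    ring
  rw [hsum]
  apply Dvd.dvd.mul_left
  rw [← hfact]
  exact gdiff p m d e hp (by omega) he1 hpe hel

lemma dsq_dvd (m d : ℕ) (hm : 2 ≤ m) (hd : 1 ≤ d) :
    ((d:ℤ))^2 ∣ ∑ e ∈ d.divisors, (ArithmeticFunction.moebius (d / e) : ℤ)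
      * (-1)^((m-1)*(d - e)) * (Nat.choose (m*e - 1) (e - 1) : ℤ) := by
  have hprod : ∏ p ∈ d.primeFactors, (p:ℤ)^(2 * d.factorization p) = ((d:ℤ))^2 := by
    have h1 : ∏ p ∈ d.primeFactors, p^(d.factorization p) = d := by
      rw [← Nat.support_factorization]
      exact Nat.factorization_prod_pow_eq_self (by omega)
    have h2 : ∏ p ∈ d.primeFactors, p^(2 * d.factorization p)
        = (∏ p ∈ d.primeFactors, p^(d.factorization p))^2 := by
      rw [← Finset.prod_pow]
      exact Finset.prod_congr rfl (fun p _ => by rw [← pow_mul, Nat.mul_comm])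
    have := congrArg (Nat.cast (R := ℤ)) (h2.trans (by rw [h1]))
    push_cast at this
    exact this
  rw [← hprod]
  apply Finset.prod_dvd_of_coprime
  · intro p hp q hq hne
    simp only [Function.onFun]
    have hpp := Nat.prime_of_mem_primeFactors hp
    have hqp := Nat.prime_of_mem_primeFactors hq
    have hnat : Nat.Coprime (p^(2 * d.factorization p)) (q^(2 * d.factorization q)) :=
      Nat.Coprime.pow _ _ ((Nat.coprime_primes hpp hqp).mpr hne)
    have := Nat.isCoprime_iff_coprime.mpr hnat
    have hc1 : ((p^(2 * d.factorization p) : ℕ) : ℤ) = (p:ℤ)^(2 * d.factorization p) := by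
      push_cast; ring
    have hc2 : ((q^(2 * d.factorization q) : ℕ) : ℤ) = (q:ℤ)^(2 * d.factorization q) := by
      push_cast; ring
    rwa [hc1, hc2] at this
  · intro p hp
    exact moebius_pair m d p hm hd (Nat.prime_of_mem_primeFactors hp)
      (Nat.dvd_of_mem_primeFactors hp)

lemma choose_mono_of_le_half (n : ℕ) : ∀ b a, a ≤ b → b ≤ n/2 → n.choose a ≤ n.choose b := by
  intro b
  induction b with
  | zero => intro a ha _; simp [Nat.le_zero.mp ha]
  | succ b ih =>
    intro a ha hb
    rcases Nat.lt_or_ge a (b+1) with h | h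
    · calc n.choose a ≤ n.choose b := ih a (by omega) (by omega)
        _ ≤ n.choose (b+1) := Nat.choose_le_succ_of_lt_half_left (by omega)
    · have : a = b+1 := by omega
      rw [this]

lemma sum_range_choose_le (m d : ℕ) (hm : 2 ≤ m) (hd : 2 ≤ d) :
    ∀ j, j ≤ d/2 → ∑ k ∈ Finset.range j, Nat.choose (m*d-1) k ≤ Nat.choose (m*d-1) j := by
  intro j
  induction j with
  | zero => simp
  | succ j ih =>
    intro hj
    rw [Finset.sum_range_succ]
    have hstep : 2 * Nat.choose (m*d-1) j ≤ Nat.choose (m*d-1) (j+1) := by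
      have heq := Nat.choose_succ_right_eq (m*d-1) j
      have hmd : 2*d ≤ m*d := Nat.mul_le_mul_right d hm
      have hineq : 2*(j+1) ≤ (m*d-1) - j := by omega
      nlinarith [Nat.choose_pos (show j ≤ m*d-1 by omega)]
    have := ih (by omega)
    omega

lemma erase_sum_le (m d : ℕ) (hm : 2 ≤ m) (hd : 1 ≤ d) :
    ∑ e ∈ d.divisors.erase d, Nat.choose (m*e-1) (e-1) ≤ Nat.choose (m*d-1) (d-1) := by
  rcases Nat.lt_or_ge d 2 with h | hd2
  · have hd1 : d = 1 := by omega
    subst hd1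
    simp
  have hsub : ∀ e ∈ d.divisors.erase d, 1 ≤ e ∧ e ≤ d/2 ∧ e ∣ d := by
    intro e he
    rw [Finset.mem_erase, Nat.mem_divisors] at he
    obtain ⟨hne, hdvd, -⟩ := he
    have he1 : 1 ≤ e := Nat.pos_of_dvd_of_pos hdvd (by omega)
    refine ⟨he1, ?_, hdvd⟩
    obtain ⟨t, ht⟩ := hdvd
    have ht2 : 2 ≤ t := by
      rcases Nat.lt_or_ge t 2 with h' | h'
      · interval_cases t
        · omega
        · omega
      · exact h'
    have : 2*e ≤ d := by rw [ht]; nlinarith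
    omega
  calc ∑ e ∈ d.divisors.erase d, Nat.choose (m*e-1) (e-1)
      ≤ ∑ e ∈ d.divisors.erase d, Nat.choose (m*d-1) (e-1) := by
        apply Finset.sum_le_sum
        intro e he
        apply Nat.choose_le_choose
        have := (hsub e he).2.2
        have h1 : e ≤ d := Nat.le_of_dvd (by omega) this
        have : m*e ≤ m*d := Nat.mul_le_mul_left m h1
        omega
    _ = ∑ k ∈ (d.divisors.erase d).image (fun e => e - 1), Nat.choose (m*d-1) k := by
        rw [Finset.sum_image]
        intro x hx y hy hxy
        simp only at hxy
        have hx1 := (hsub x hx).1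
        have hy1 := (hsub y hy).1
        omega
    _ ≤ ∑ k ∈ Finset.range (d/2), Nat.choose (m*d-1) k := by
        apply Finset.sum_le_sum_of_subset
        intro k hk
        rw [Finset.mem_image] at hk
        obtain ⟨e, he, rfl⟩ := hk
        rw [Finset.mem_range]
        have := hsub e he
        omega
    _ ≤ Nat.choose (m*d-1) (d/2) := sum_range_choose_le m d hm hd2 _ le_rfl
    _ ≤ Nat.choose (m*d-1) (d-1) := by
        apply choose_mono_of_le_half
        · omega
        · have hmd : 2*d ≤ m*d := Nat.mul_le_mul_right d hm
          omega

lemma moebius_abs_le (x : ℕ) : |(ArithmeticFunction.moebius x : ℤ)| ≤ 1 := by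
  by_cases h : Squarefree x
  · rw [ArithmeticFunction.moebius_apply_of_squarefree h, abs_pow, abs_neg, abs_one, one_pow]
  · rw [ArithmeticFunction.moebius_eq_zero_of_not_squarefree h]
    simp

lemma N_nonneg (m d : ℕ) (hm : 2 ≤ m) (hd : 1 ≤ d) :
    0 ≤ ∑ e ∈ d.divisors, (ArithmeticFunction.moebius (d / e) : ℤ)
      * (-1)^((m-1)*(d - e)) * (Nat.choose (m*e - 1) (e - 1) : ℤ) := by
  set F : ℕ → ℤ := fun e => (ArithmeticFunction.moebius (d / e) : ℤ)
      * (-1)^((m-1)*(d - e)) * (Nat.choose (m*e - 1) (e - 1) : ℤ) with hF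
  have hdmem : d ∈ d.divisors := Nat.mem_divisors_self d (by omega)
  rw [← Finset.add_sum_erase _ F hdmem]
  have hFd : F d = (Nat.choose (m*d - 1) (d - 1) : ℤ) := by
    simp only [hF]
    rw [Nat.div_self (by omega), Nat.sub_self]
    simp
  have habs : |∑ e ∈ d.divisors.erase d, F e| ≤ (Nat.choose (m*d-1) (d-1) : ℤ) := by
    calc |∑ e ∈ d.divisors.erase d, F e| ≤ ∑ e ∈ d.divisors.erase d, |F e| :=
          Finset.abs_sum_le_sum_abs _ _
      _ ≤ ∑ e ∈ d.divisors.erase d, (Nat.choose (m*e-1) (e-1) : ℤ) := by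
          apply Finset.sum_le_sum
          intro e he
          simp only [hF]
          rw [abs_mul, abs_mul, abs_pow, abs_neg, abs_one, one_pow, mul_one]
          have h1 := moebius_abs_le (d / e)
          have h2 : |(Nat.choose (m*e-1) (e-1) : ℤ)| = (Nat.choose (m*e-1) (e-1) : ℤ) :=
            abs_of_nonneg (by positivity)
          rw [h2]
          nlinarith [abs_nonneg ((ArithmeticFunction.moebius (d / e) : ℤ)),
            (Nat.cast_nonneg (Nat.choose (m*e-1) (e-1)) : (0:ℤ) ≤ _)]
      _ ≤ (Nat.choose (m*d-1) (d-1) : ℤ) := by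
          exact_mod_cast Nat.cast_le.mpr (erase_sum_le m d hm hd)
  rw [hFd]
  have := abs_le.mp habs
  linarith [this.1]

/-- For m ≥ 2 and d ≥ 1, the quantity
(1/d²) · ∑_{e | d} μ(d/e) · (-1)^{(m-1)(d-e)} · C(me-1, e-1) is a non-negative integer. -/
theorem dt_loop_quiver_value_at_one_is_nonneg_integer (m d : ℕ) (hm : 2 ≤ m) (hd : 1 ≤ d) :
    ∃ n : ℕ, (n : ℚ) =
      (1 / (d : ℚ) ^ 2) *
        ∑ e ∈ d.divisors,
          ((ArithmeticFunction.moebius (d / e) : ℤ) : ℚ) * (-1) ^ ((m - 1) * (d - e)) *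
            (Nat.choose (m * e - 1) (e - 1) : ℚ) := by
  set N : ℤ := ∑ e ∈ d.divisors, (ArithmeticFunction.moebius (d / e) : ℤ)
      * (-1)^((m-1)*(d - e)) * (Nat.choose (m*e - 1) (e - 1) : ℤ) with hN
  obtain ⟨c, hc⟩ := dsq_dvd m d hm hd
  have hN0 : 0 ≤ N := N_nonneg m d hm hd
  have hdpos : (0:ℤ) < (d:ℤ)^2 := by positivity
  have hc0 : 0 ≤ c := by nlinarith
  refine ⟨c.toNat, ?_⟩
  have hsum : ∑ e ∈ d.divisors,
      ((ArithmeticFunction.moebius (d / e) : ℤ) : ℚ) * (-1) ^ ((m - 1) * (d - e)) *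
        (Nat.choose (m * e - 1) (e - 1) : ℚ) = ((N : ℤ) : ℚ) := by
    rw [hN]
    push_cast
    rfl
  rw [hsum]
  have hc' : N = (d:ℤ)^2 * c := hc
  rw [hc']
  have hdne : ((d:ℚ))^2 ≠ 0 := by positivity
  push_cast [Int.toNat_of_nonneg hc0]
  field_simp
  exact_mod_cast congrArg (fun z : ℤ => (z : ℚ)) (Int.toNat_of_nonneg hc0)
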